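/- Assume M > (2/(3√3))√(α³/β) and let (x_l, v_l) be a solution of the controlled discrete Klein–Gordon system with the feedback control u_l(t) = u(v_l(t)). For each t, let I₂(t) = {l : |v_l(t)| > a₂}, I₁(t) = {l : a₁ ≤ |v_l(t)| ≤ a₂}, I₀(t) = {l : |v_l(t)| < a₁}, and set C₂ = (γ² − 1) α a₂², C₁ = a₁(M − (2/(3√3))√(α³/β)). Then the Lyapunov function V(t) = (1/2) Σ_{l∈Λ̄} [v_l(t)² + (1/2) Σ_{l'∼l} (x_{l'}(t) − x_l(t))²/h²] satisfies V'(t) ≤ Σ_{l∈I₂(t)} (−C₂) + Σ_{l∈I₁(t)} (−C₁) + Σ_{l∈I₀(t)} (−β v_l(t)⁴) ≤ 0 for all t; in particular V is nonincreasing. -/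

import Mathlib

open Finset Filter

/-- The discrete torus `(ℤ/Dℤ)^n`. -/
abbrev Site (D n : ℕ) : Type := Fin n → ZMod D

/-- Sum over the `2n` neighbors `l ± e_k` of a site `l`. -/
noncomputable def nbrSum {D n : ℕ} (g : Site D n → ℝ) (l : Site D n) : ℝ :=
  ∑ k : Fin n, (g (Function.update l k (l k + 1)) + g (Function.update l k (l k - 1)))

/-- The discrete Laplacian `Δ_D f(l) = Σ_{l'∼l} (f(l') − f(l))/h²` with `h = 1/D`. -/
noncomputable def lap {D n : ℕ} (f : Site D n → ℝ) (l : Site D n) : ℝ :=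
  nbrSum (fun l' => (f l' - f l) / ((1 : ℝ) / (D : ℝ)) ^ 2) l


/-- The feedback control of the paper (equation (2.3)). -/
noncomputable def fb (M a₁ a₂ : ℝ) (v : ℝ) : ℝ :=
  if 2 * a₂ ≤ |v| then 0
  else if a₂ < |v| then -M * (v / |v|) * (2 - |v| / a₂)
  else if a₁ ≤ |v| then -M * (v / |v|)
  else -M * (v / a₁)

/-! ### Auxiliary machinery -/

/-- Shift equiv in direction `k`. -/
def shiftE {D n : ℕ} (k : Fin n) : Site D n ≃ Site D n where
  toFun l := Function.update l k (l k + 1)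
  invFun l := Function.update l k (l k - 1)
  left_inv l := by
    funext j
    by_cases hj : j = k
    · subst hj; simp
    · simp [Function.update_of_ne hj]
  right_inv l := by
    funext j
    by_cases hj : j = k
    · subst hj; simp
    · simp [Function.update_of_ne hj]

@[simp] lemma shiftE_apply {D n : ℕ} (k : Fin n) (l : Site D n) :
    shiftE k l = Function.update l k (l k + 1) := rfl

@[simp] lemma shiftE_symm_apply {D n : ℕ} (k : Fin n) (l : Site D n) :
    (shiftE k).symm l = Function.update l k (l k - 1) := rfl

lemma cancel0 {ι : Type*} [Fintype ι] (σ : ι ≃ ι) (X V : ι → ℝ) :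
    ∑ l : ι, (V l * (X (σ l) - X l) + V l * (X (σ.symm l) - X l)
      + (1/2) * ((X (σ l) - X l) * (V (σ l) - V l))
      + (1/2) * ((X (σ.symm l) - X l) * (V (σ.symm l) - V l))) = 0 := by
  have h1 : ∑ l : ι, (fun m => V (σ m) * (X m - X (σ m))
        + (1/2) * ((X m - X (σ m)) * (V m - V (σ m)))) (σ.symm l)
      = ∑ m : ι, (V (σ m) * (X m - X (σ m))
        + (1/2) * ((X m - X (σ m)) * (V m - V (σ m)))) :=
    Equiv.sum_comp σ.symm (fun m => V (σ m) * (X m - X (σ m))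
        + (1/2) * ((X m - X (σ m)) * (V m - V (σ m))))
  simp only [Equiv.apply_symm_apply] at h1
  have split : ∑ l : ι, (V l * (X (σ l) - X l) + V l * (X (σ.symm l) - X l)
      + (1/2) * ((X (σ l) - X l) * (V (σ l) - V l))
      + (1/2) * ((X (σ.symm l) - X l) * (V (σ.symm l) - V l)))
      = (∑ l : ι, (V l * (X (σ l) - X l) + (1/2) * ((X (σ l) - X l) * (V (σ l) - V l))))
      + ∑ l : ι, (V l * (X (σ.symm l) - X l)
          + (1/2) * ((X (σ.symm l) - X l) * (V (σ.symm l) - V l))) := by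
    rw [← Finset.sum_add_distrib]
    exact Finset.sum_congr rfl fun l _ => by ring
  rw [split, h1, ← Finset.sum_add_distrib]
  have : ∀ l : ι, V l * (X (σ l) - X l) + (1/2) * ((X (σ l) - X l) * (V (σ l) - V l))
      + (V (σ l) * (X l - X (σ l)) + (1/2) * ((X l - X (σ l)) * (V l - V (σ l)))) = 0 :=
    fun l => by ring
  exact Finset.sum_eq_zero fun l _ => this l

lemma cubic_bound (α β : ℝ) (hα : 0 < α) (hβ : 0 < β) (s : ℝ) (hs : 0 ≤ s) :
    α * s - β * s ^ 3 ≤ 2 / (3 * Real.sqrt 3) * Real.sqrt (α ^ 3 / β) := by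
  set s₀ := Real.sqrt (α / (3 * β)) with hs₀
  have hs₀0 : 0 ≤ s₀ := Real.sqrt_nonneg _
  have hs₀sq : s₀ ^ 2 = α / (3 * β) := Real.sq_sqrt (by positivity)
  have ht : Real.sqrt 3 > 0 := by positivity
  have htsq : Real.sqrt 3 ^ 2 = 3 := Real.sq_sqrt (by norm_num)
  have hA0 : 0 ≤ Real.sqrt (α ^ 3 / β) := Real.sqrt_nonneg _
  have hAsq : Real.sqrt (α ^ 3 / β) ^ 2 = α ^ 3 / β := Real.sq_sqrt (by positivity)
  have heq : 2 / (3 * Real.sqrt 3) * Real.sqrt (α ^ 3 / β) = 2 * α / 3 * s₀ := by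
    have h1 : (2 / (3 * Real.sqrt 3) * Real.sqrt (α ^ 3 / β)) ^ 2 = (2 * α / 3 * s₀) ^ 2 := by
      rw [mul_pow, mul_pow, hAsq, hs₀sq, div_pow, mul_pow, htsq]
      field_simp
    have h2 : 0 ≤ 2 / (3 * Real.sqrt 3) * Real.sqrt (α ^ 3 / β) := by positivity
    have h3 : 0 ≤ 2 * α / 3 * s₀ := by positivity
    nlinarith [h1, h2, h3]
  rw [heq]
  have h3 : β * s₀ ^ 2 = α / 3 := by rw [hs₀sq]; field_simp
  have key : β * (s - s₀) ^ 2 * (s + 2 * s₀) = β * s ^ 3 - α * s + 2 * α / 3 * s₀ := by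
    linear_combination (2 * s₀ - 3 * s) * h3
  nlinarith [mul_nonneg (mul_nonneg hβ.le (sq_nonneg (s - s₀)))
    (by linarith : (0:ℝ) ≤ s + 2 * s₀), key]

set_option maxHeartbeats 1000000 in
lemma pointwise_bound (α β M γ a₁ a₂ C₁ C₂ K : ℝ)
    (hα : 0 < α) (hβ : 0 < β) (hM0 : 0 < M)
    (hK : K = 2 / (3 * Real.sqrt 3) * Real.sqrt (α ^ 3 / β))
    (hKM : K < M)
    (ha₁0 : 0 < a₁) (ha₂0 : 0 < a₂) (h12 : a₁ ≤ a₂)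
    (hMa₁ : α * a₁ < M)
    (hba₂ : β * a₂ ^ 2 = γ ^ 2 * α) (hγ1 : 1 < γ)
    (hC₁ : C₁ = a₁ * (M - K)) (hC₂ : C₂ = (γ ^ 2 - 1) * α * a₂ ^ 2)
    (w : ℝ) :
    w * ((α - β * w ^ 2) * w + fb M a₁ a₂ w)
      ≤ (if a₂ < |w| then -C₂ else 0) + (if a₁ ≤ |w| ∧ |w| ≤ a₂ then -C₁ else 0)
        + (if |w| < a₁ then -(β * w ^ 4) else 0)
    ∧ (if a₂ < |w| then -C₂ else 0) + (if a₁ ≤ |w| ∧ |w| ≤ a₂ then -C₁ else 0)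
        + (if |w| < a₁ then -(β * w ^ 4) else 0) ≤ 0 := by
  have hC₁0 : 0 ≤ C₁ := by rw [hC₁]; exact mul_nonneg ha₁0.le (by linarith)
  have hC₂0 : 0 ≤ C₂ := by
    rw [hC₂]
    have : (0:ℝ) < γ ^ 2 - 1 := by
      nlinarith [mul_pos (sub_pos.mpr hγ1) (show (0:ℝ) < γ + 1 by linarith)]
    exact mul_nonneg (mul_nonneg this.le hα.le) (sq_nonneg _)
  have hs0 : (0:ℝ) ≤ |w| := abs_nonneg w
  have hww : w * w = |w| * |w| := (abs_mul_abs_self w).symm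
  have hsq : w ^ 2 = |w| ^ 2 := (sq_abs w).symm
  have hsq4 : w ^ 4 = |w| ^ 4 := by
    rw [show w ^ 4 = (w ^ 2) ^ 2 by ring, hsq]; ring
  rcases lt_or_ge a₂ |w| with h2 | h2
  · -- |w| > a₂
    have hw0 : w ≠ 0 := by
      intro h; rw [h] at h2; simp at h2; linarith
    have habs : |w| ≠ 0 := abs_ne_zero.mpr hw0
    have e1 : w * (w / |w|) = |w| := by
      rw [← mul_div_assoc, hww, mul_div_assoc, div_self habs, mul_one]
    rw [if_pos h2, if_neg (by rintro ⟨-, h⟩; linarith), if_neg (by intro h; linarith)]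
    refine ⟨?_, by linarith⟩
    have hfb : w * fb M a₁ a₂ w ≤ 0 := by
      rcases le_or_gt (2 * a₂) |w| with hc | hc
      · rw [fb, if_pos hc]; simp
      · rw [fb, if_neg (not_le.mpr hc), if_pos h2]
        have heq : w * (-M * (w / |w|) * (2 - |w| / a₂)) = -(M * |w| * (2 - |w| / a₂)) := by
          linear_combination (-M * (2 - |w| / a₂)) * e1
        rw [heq, neg_nonpos]
        have hd : |w| / a₂ < 2 := by rw [div_lt_iff₀ ha₂0]; linarith
        have h2' : 0 ≤ 2 - |w| / a₂ := by linarith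
        positivity
    have hquad : (α - β * w ^ 2) * w ^ 2 ≤ -C₂ := by
      have hss : a₂ ^ 2 ≤ |w| ^ 2 := by nlinarith
      have h1 : α - β * |w| ^ 2 ≤ α * (1 - γ ^ 2) := by
        have hint := mul_le_mul_of_nonneg_left hss hβ.le
        nlinarith [hint, hba₂]
      have hneg : α * (1 - γ ^ 2) < 0 := by
        nlinarith [mul_pos (sub_pos.mpr hγ1) (show (0:ℝ) < γ + 1 by linarith), hα]
      have t1 := mul_le_mul_of_nonneg_left h1 (sq_nonneg |w|)
      have t2 := mul_le_mul_of_nonpos_right hss hneg.le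
      rw [hC₂, hsq]; linarith [t1, t2]
    nlinarith [hfb, hquad, mul_add w ((α - β * w ^ 2) * w) (fb M a₁ a₂ w)]
  · rcases le_or_gt a₁ |w| with h1 | h1
    · -- a₁ ≤ |w| ≤ a₂
      have hw0 : w ≠ 0 := by
        intro h; rw [h] at h1; simp at h1; linarith
      have habs : |w| ≠ 0 := abs_ne_zero.mpr hw0
      have e1 : w * (w / |w|) = |w| := by
        rw [← mul_div_assoc, hww, mul_div_assoc, div_self habs, mul_one]
      rw [if_neg (by linarith), if_pos ⟨h1, h2⟩, if_neg (by intro h; linarith)]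
      refine ⟨?_, by linarith⟩
      have hfb : fb M a₁ a₂ w = -M * (w / |w|) := by
        rw [fb, if_neg (by intro h; linarith), if_neg (by intro h; linarith), if_pos h1]
      have hwfb : w * fb M a₁ a₂ w = -(M * |w|) := by
        rw [hfb]; linear_combination (-M) * e1
      have hcb := cubic_bound α β hα hβ |w| hs0
      rw [← hK] at hcb
      have t1 := mul_le_mul_of_nonneg_left hcb hs0
      have t3 : |w| * (K - M) ≤ a₁ * (K - M) :=
        mul_le_mul_of_nonpos_right h1 (by linarith)
      rw [hC₁, mul_add, hwfb]
      have hsqa : α * w ^ 2 = α * |w| ^ 2 := by rw [hsq]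
      have hsqb : β * w ^ 4 = β * |w| ^ 4 := by rw [hsq4]
      linarith [t1, t3, hsqa, hsqb]
    · -- |w| < a₁
      rw [if_neg (by intro h; linarith), if_neg (by rintro ⟨h, -⟩; linarith), if_pos h1]
      have hfb : fb M a₁ a₂ w = -M * (w / a₁) := by
        rw [fb, if_neg (by intro h; linarith), if_neg (by intro h; linarith),
          if_neg (by intro h; linarith)]
      have hb4 : 0 ≤ β * w ^ 4 := by positivity
      refine ⟨?_, by linarith⟩
      rw [hfb]
      have hd : α * w ^ 2 ≤ M * w ^ 2 / a₁ := by
        rw [le_div_iff₀ ha₁0]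
        nlinarith [mul_nonneg (sub_nonneg.mpr hMa₁.le) (sq_nonneg w)]
      have e2 : w * ((α - β * w ^ 2) * w + -M * (w / a₁)) =
          (α * w ^ 2 - β * w ^ 4) - M * w ^ 2 / a₁ := by
        field_simp
        ring
      rw [e2]
      linarith [hd]

/-- The cross-term that sums to zero by summation by parts. -/
noncomputable def Tkl {D n : ℕ} (x v : Site D n → ℝ → ℝ) (t : ℝ) (k : Fin n) (l : Site D n) :
    ℝ :=
  v l t * ((x (Function.update l k (l k + 1)) t - x l t) / ((1 : ℝ) / (D : ℝ)) ^ 2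
      + (x (Function.update l k (l k - 1)) t - x l t) / ((1 : ℝ) / (D : ℝ)) ^ 2)
    + (1/4) * (2 * (x (Function.update l k (l k + 1)) t - x l t)
          * (v (Function.update l k (l k + 1)) t - v l t) / ((1 : ℝ) / (D : ℝ)) ^ 2
      + 2 * (x (Function.update l k (l k - 1)) t - x l t)
          * (v (Function.update l k (l k - 1)) t - v l t) / ((1 : ℝ) / (D : ℝ)) ^ 2)

lemma Tsum_zero {D n : ℕ} [NeZero D] (x v : Site D n → ℝ → ℝ) (t : ℝ) (k : Fin n) :
    ∑ l : Site D n, Tkl x v t k l = 0 := by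
  have h0 := cancel0 (shiftE (D := D) (n := n) k) (fun l => x l t) (fun l => v l t)
  simp only [shiftE_apply, shiftE_symm_apply] at h0
  calc ∑ l : Site D n, Tkl x v t k l
      = (∑ l : Site D n,
          (v l t * (x (Function.update l k (l k + 1)) t - x l t)
            + v l t * (x (Function.update l k (l k - 1)) t - x l t)
            + (1/2) * ((x (Function.update l k (l k + 1)) t - x l t)
                * (v (Function.update l k (l k + 1)) t - v l t))
            + (1/2) * ((x (Function.update l k (l k - 1)) t - x l t)
                * (v (Function.update l k (l k - 1)) t - v l t))))
          / ((1 : ℝ) / (D : ℝ)) ^ 2 := by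
        rw [Finset.sum_div]
        exact Finset.sum_congr rfl fun l _ => by simp only [Tkl]; ring
    _ = 0 / ((1 : ℝ) / (D : ℝ)) ^ 2 := by rw [h0]
    _ = 0 := zero_div _

/-- The derivative of the Lyapunov function: the Laplacian cross-terms cancel. -/
lemma lyap_deriv {D n : ℕ} [NeZero D] (x v w : Site D n → ℝ → ℝ)
    (hx : ∀ l t, HasDerivAt (x l) (v l t) t)
    (hv : ∀ l t, HasDerivAt (v l) (lap (fun l' => x l' t) l + w l t) t) (t : ℝ) :
    HasDerivAt
      (fun s => (1 / 2) * ∑ l : Site D n,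
        ((v l s) ^ 2 +
          (1 / 2) * nbrSum (fun l' => (x l' s - x l s) ^ 2 / ((1 : ℝ) / (D : ℝ)) ^ 2) l))
      (∑ l : Site D n, v l t * w l t) t := by
  have hder : HasDerivAt
      (fun s => (1 / 2) * ∑ l : Site D n,
        ((v l s) ^ 2 +
          (1 / 2) * nbrSum (fun l' => (x l' s - x l s) ^ 2 / ((1 : ℝ) / (D : ℝ)) ^ 2) l))
      ((1 / 2) * ∑ l : Site D n,
        (2 * v l t * (lap (fun l' => x l' t) l + w l t)
          + (1 / 2) * ∑ k : Fin n,
            (2 * (x (Function.update l k (l k + 1)) t - x l t)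
                * (v (Function.update l k (l k + 1)) t - v l t) / ((1 : ℝ) / (D : ℝ)) ^ 2
              + 2 * (x (Function.update l k (l k - 1)) t - x l t)
                * (v (Function.update l k (l k - 1)) t - v l t) / ((1 : ℝ) / (D : ℝ)) ^ 2)))
      t := by
    apply HasDerivAt.const_mul
    apply HasDerivAt.fun_sum
    intro l _
    apply HasDerivAt.add
    · have h := (hv l t).fun_pow 2
      convert h using 1
      · rfl
      push_cast
      ring
    · apply HasDerivAt.const_mul
      have hfun : (fun s => nbrSum (fun l' => (x l' s - x l s) ^ 2 / ((1 : ℝ) / (D : ℝ)) ^ 2) l)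
          = fun s => ∑ k : Fin n,
              ((x (Function.update l k (l k + 1)) s - x l s) ^ 2 / ((1 : ℝ) / (D : ℝ)) ^ 2
              + (x (Function.update l k (l k - 1)) s - x l s) ^ 2 / ((1 : ℝ) / (D : ℝ)) ^ 2) :=
        rfl
      rw [hfun]
      apply HasDerivAt.fun_sum
      intro k _
      apply HasDerivAt.add
      · have h := (((hx (Function.update l k (l k + 1)) t).fun_sub (hx l t)).fun_pow 2).div_const
          (((1 : ℝ) / (D : ℝ)) ^ 2)
        convert h using 1
        · rfl
        push_cast
        ring
      · have h := (((hx (Function.update l k (l k - 1)) t).fun_sub (hx l t)).fun_pow 2).div_const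
          (((1 : ℝ) / (D : ℝ)) ^ 2)
        convert h using 1
        · rfl
        push_cast
        ring
  have hid : ((1 / 2) * ∑ l : Site D n,
        (2 * v l t * (lap (fun l' => x l' t) l + w l t)
          + (1 / 2) * ∑ k : Fin n,
            (2 * (x (Function.update l k (l k + 1)) t - x l t)
                * (v (Function.update l k (l k + 1)) t - v l t) / ((1 : ℝ) / (D : ℝ)) ^ 2
              + 2 * (x (Function.update l k (l k - 1)) t - x l t)
                * (v (Function.update l k (l k - 1)) t - v l t) / ((1 : ℝ) / (D : ℝ)) ^ 2)))
      = ∑ l : Site D n, v l t * w l t := by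
    rw [Finset.mul_sum]
    have key : ∀ l ∈ (Finset.univ : Finset (Site D n)),
        (1/2) * (2 * v l t * (lap (fun l' => x l' t) l + w l t)
          + (1 / 2) * ∑ k : Fin n,
            (2 * (x (Function.update l k (l k + 1)) t - x l t)
                * (v (Function.update l k (l k + 1)) t - v l t) / ((1 : ℝ) / (D : ℝ)) ^ 2
              + 2 * (x (Function.update l k (l k - 1)) t - x l t)
                * (v (Function.update l k (l k - 1)) t - v l t) / ((1 : ℝ) / (D : ℝ)) ^ 2))
        = v l t * w l t + ∑ k : Fin n, Tkl x v t k l := by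
      intro l _
      have hlap : lap (fun l' => x l' t) l = ∑ k : Fin n,
          ((x (Function.update l k (l k + 1)) t - x l t) / ((1 : ℝ) / (D : ℝ)) ^ 2
            + (x (Function.update l k (l k - 1)) t - x l t) / ((1 : ℝ) / (D : ℝ)) ^ 2) := rfl
      have hT : ∑ k : Fin n, Tkl x v t k l
          = v l t * (∑ k : Fin n,
              ((x (Function.update l k (l k + 1)) t - x l t) / ((1 : ℝ) / (D : ℝ)) ^ 2
                + (x (Function.update l k (l k - 1)) t - x l t) / ((1 : ℝ) / (D : ℝ)) ^ 2))
            + (1/4) * (∑ k : Fin n,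
              (2 * (x (Function.update l k (l k + 1)) t - x l t)
                  * (v (Function.update l k (l k + 1)) t - v l t) / ((1 : ℝ) / (D : ℝ)) ^ 2
                + 2 * (x (Function.update l k (l k - 1)) t - x l t)
                  * (v (Function.update l k (l k - 1)) t - v l t) / ((1 : ℝ) / (D : ℝ)) ^ 2)) := by
        rw [Finset.mul_sum, Finset.mul_sum, ← Finset.sum_add_distrib]
        exact Finset.sum_congr rfl fun k _ => by simp only [Tkl]
      rw [hlap, hT]
      ring
    rw [Finset.sum_congr rfl key, Finset.sum_add_distrib]
    have hzero : ∑ l : Site D n, ∑ k : Fin n, Tkl x v t k l = 0 := by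
      rw [Finset.sum_comm]
      exact Finset.sum_eq_zero fun k _ => Tsum_zero x v t k
    rw [hzero, add_zero]
  rw [← hid]
  exact hder

/-- Along the feedback control, the Lyapunov function satisfies
`V'(t) ≤ Σ_{I₂} (−C₂) + Σ_{I₁} (−C₁) + Σ_{I₀} (−β v_l⁴) ≤ 0`;
in particular `V` is nonincreasing. -/
theorem lyapunov_decreasing (D n : ℕ) [NeZero D] (hn : 1 ≤ n)
    (α β M γ : ℝ) (hα : 0 < α) (hβ : 0 < β)
    (hM : 2 / (3 * Real.sqrt 3) * Real.sqrt (α ^ 3 / β) < M)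
    (hγ : max 1 (1 / M * Real.sqrt (α ^ 3 / β)) < γ)
    (a₁ a₂ C₁ C₂ : ℝ)
    (ha₁ : a₁ = γ⁻¹ * Real.sqrt (α / β)) (ha₂ : a₂ = γ * Real.sqrt (α / β))
    (hC₁ : C₁ = a₁ * (M - 2 / (3 * Real.sqrt 3) * Real.sqrt (α ^ 3 / β)))
    (hC₂ : C₂ = (γ ^ 2 - 1) * α * a₂ ^ 2)
    (x v : Site D n → ℝ → ℝ)
    (hx : ∀ l t, HasDerivAt (x l) (v l t) t)
    (hv : ∀ l t, HasDerivAt (v l)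
      (lap (fun l' => x l' t) l + (α - β * (v l t) ^ 2) * v l t + fb M a₁ a₂ (v l t)) t) :
    ∀ t : ℝ, ∃ d S : ℝ,
      S = (∑ l ∈ Finset.univ.filter (fun l : Site D n => a₂ < |v l t|), -C₂)
        + (∑ l ∈ Finset.univ.filter (fun l : Site D n => a₁ ≤ |v l t| ∧ |v l t| ≤ a₂), -C₁)
        + (∑ l ∈ Finset.univ.filter (fun l : Site D n => |v l t| < a₁), -(β * (v l t) ^ 4)) ∧
      HasDerivAt
        (fun s => (1 / 2) * ∑ l : Site D n,
          ((v l s) ^ 2 +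
            (1 / 2) * nbrSum (fun l' => (x l' s - x l s) ^ 2 / ((1 : ℝ) / (D : ℝ)) ^ 2) l))
        d t ∧
      d ≤ S ∧ S ≤ 0 := by
  intro t
  -- derived facts
  have hK0 : (0:ℝ) < 2 / (3 * Real.sqrt 3) * Real.sqrt (α ^ 3 / β) := by positivity
  have hM0 : 0 < M := hK0.trans hM
  have hγ1 : (1:ℝ) < γ := lt_of_le_of_lt (le_max_left _ _) hγ
  have hγ0 : (0:ℝ) < γ := by linarith
  have hsab : 0 < Real.sqrt (α / β) := Real.sqrt_pos.mpr (by positivity)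
  have hsab2 : Real.sqrt (α / β) ^ 2 = α / β := Real.sq_sqrt (by positivity)
  have hA : Real.sqrt (α ^ 3 / β) = α * Real.sqrt (α / β) := by
    rw [show α ^ 3 / β = α ^ 2 * (α / β) by ring, Real.sqrt_mul (sq_nonneg α),
      Real.sqrt_sq hα.le]
  have ha₁0 : 0 < a₁ := by rw [ha₁]; exact mul_pos (inv_pos.mpr hγ0) hsab
  have ha₂0 : 0 < a₂ := by rw [ha₂]; exact mul_pos hγ0 hsab
  have hinv : γ⁻¹ * γ = 1 := inv_mul_cancel₀ hγ0.ne'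
  have h12 : a₁ ≤ a₂ := by
    rw [ha₁, ha₂]
    have : γ⁻¹ ≤ γ := by nlinarith [hinv, hγ1, hγ0]
    exact mul_le_mul_of_nonneg_right this hsab.le
  have hγM : Real.sqrt (α ^ 3 / β) < γ * M := by
    have h := lt_of_le_of_lt (le_max_right 1 (1 / M * Real.sqrt (α ^ 3 / β))) hγ
    have h3 := mul_lt_mul_of_pos_left h hM0
    rw [show M * (1 / M * Real.sqrt (α ^ 3 / β)) = Real.sqrt (α ^ 3 / β) by
      field_simp] at h3
    linarith [h3]
  have hMa₁ : α * a₁ < M := by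
    rw [ha₁]
    have hkey : α * (γ⁻¹ * Real.sqrt (α / β)) * γ = Real.sqrt (α ^ 3 / β) := by
      rw [hA]; field_simp
    nlinarith [hkey, hγM, hγ0]
  have hba₂ : β * a₂ ^ 2 = γ ^ 2 * α := by
    rw [ha₂, mul_pow, hsab2]
    field_simp
    try ring
  -- the actual derivative
  refine ⟨∑ l : Site D n,
      (v l t * ((α - β * (v l t) ^ 2) * v l t + fb M a₁ a₂ (v l t))), _, rfl, ?_, ?_, ?_⟩
  · exact lyap_deriv x v
      (fun l s => (α - β * (v l s) ^ 2) * v l s + fb M a₁ a₂ (v l s)) hx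
      (fun l s => by have := hv l s; rwa [add_assoc] at this) t
  · rw [Finset.sum_filter, Finset.sum_filter, Finset.sum_filter,
      ← Finset.sum_add_distrib, ← Finset.sum_add_distrib]
    exact Finset.sum_le_sum fun l _ =>
      (pointwise_bound α β M γ a₁ a₂ C₁ C₂ _ hα hβ hM0 rfl hM ha₁0 ha₂0 h12 hMa₁ hba₂ hγ1
        hC₁ hC₂ (v l t)).1
  · rw [Finset.sum_filter, Finset.sum_filter, Finset.sum_filter,
      ← Finset.sum_add_distrib, ← Finset.sum_add_distrib]
    exact Finset.sum_nonpos fun l _ =>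
      (pointwise_bound α β M γ a₁ a₂ C₁ C₂ _ hα hβ hM0 rfl hM ha₁0 ha₂0 h12 hMa₁ hba₂ hγ1
        hC₁ hC₂ (v l t)).2
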